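/- With the same setup and additionally N₀ = N₁ and the Fricke transformations θ₀|_{1/2}W_N = (iN₀)^{-1/2} τ(ψ₀) θ₀ and θ₁|_{3/2}W_N = -(iN₀)^{-1/2} τ(ψ₁) θ₁ for N = 4N₀², one has δ_a^{k-1}(f|_{2-k}W_N) = -(τ(ψ₀)/τ(ψ₁)) · (δ_a^{k-1}(f))|_k W_N for every smooth f: ℍ → ℂ. -/

import Mathlib

set_option autoImplicit false
open Complex Real

/-- Fricke slash action in weight `κ`: `(f|_κ W_M)(z) = f(-1/(Mz)) (√M z)^{-κ}`. -/
noncomputable def fslash (κ : ℝ) (M : ℕ) (f : ℂ → ℂ) : ℂ → ℂ :=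
  fun z => f (-1 / ((M : ℂ) * z)) * (((Real.sqrt M : ℝ) : ℂ) * z) ^ (-(κ : ℂ))

/-- The Gauss sum `τ(ψ) = Σ_{u mod N} ψ(u) e^{2πiu/N}`. -/
noncomputable def gaussSumChar (N : ℕ) [NeZero N] (ψ : DirichletCharacter ℂ N) : ℂ :=
  ∑ u : ZMod N, ψ u * Complex.exp (2 * π * I * (u.val : ℕ) / N)

/-- The Bol-style operator
`δ_a^{k-1}(f) = θ₀^{3a-2} θ₁^{1-a} D^{k-3/2}(θ₀^{1-3a} θ₁^a f)` of weight
`k = m + 3/2`, where `D^m = (2πi)^{-m} (d/dz)^m`. -/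
noncomputable def bolDelta (m : ℕ) (a : ℤ) (θ₀ θ₁ f : ℂ → ℂ) : ℂ → ℂ :=
  fun z => (θ₀ z) ^ (3 * a - 2) * (θ₁ z) ^ (1 - a) *
    ((2 * π * I) ^ (-(m : ℤ)) *
      iteratedDerivWithin m
        (fun w => (θ₀ w) ^ (1 - 3 * a) * (θ₁ w) ^ a * f w)
        {w : ℂ | 0 < w.im} z)


lemma auxIsOpen : IsOpen {w : ℂ | 0 < w.im} := isOpen_lt continuous_const Complex.continuous_im

lemma aux_mem_upper {M : ℕ} (hM : 0 < M) {z : ℂ} (hz : 0 < z.im) :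
    0 < (-1 / ((M : ℂ) * z)).im := by
  have hz0 : z ≠ 0 := fun h => by simp [h] at hz
  have hMR : (0:ℝ) < (M : ℝ) := by exact_mod_cast hM
  have hMC : (M : ℂ) ≠ 0 := by
    simpa using (show ((M:ℝ):ℂ) ≠ 0 from Complex.ofReal_ne_zero.mpr hMR.ne')
  have key : -1 / ((M : ℂ) * z) = (((M:ℝ)⁻¹ : ℝ) : ℂ) * (-(z⁻¹)) := by
    push_cast
    field_simp
  rw [key]
  have h1 : ((((M:ℝ)⁻¹ : ℝ) : ℂ) * (-(z⁻¹))).im = (M:ℝ)⁻¹ * (-(z⁻¹)).im := by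
    simp [Complex.mul_im]
  rw [h1]
  simp only [Complex.neg_im, Complex.inv_im, neg_neg, neg_div]
  exact mul_pos (inv_pos.mpr hMR) (div_pos hz (Complex.normSq_pos.mpr hz0))

lemma aux_analytic_iter {s : Set ℂ} (hs : IsOpen s) {g : ℂ → ℂ}
    (hg : AnalyticOnNhd ℂ g s) (n : ℕ) : AnalyticOnNhd ℂ (iteratedDeriv n g) s := by
  induction n with
  | zero => simpa [iteratedDeriv_zero]
  | succ n ih => rw [iteratedDeriv_succ]; exact ih.deriv

lemma aux_iterdw {s : Set ℂ} (hs : IsOpen s) (n : ℕ) (g : ℂ → ℂ) :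
    ∀ z ∈ s, iteratedDerivWithin n g s z = iteratedDeriv n g z := by
  induction n with
  | zero => intro z hz; simp
  | succ n ih =>
    intro z hz
    rw [iteratedDerivWithin_succ, derivWithin_of_isOpen hs hz,
      iteratedDeriv_succ]
    apply Filter.EventuallyEq.deriv_eq
    filter_upwards [hs.mem_nhds hz] with ζ hζ using ih ζ hζ

lemma aux_constmul {s : Set ℂ} (hs : IsOpen s) {g : ℂ → ℂ}
    (hg : AnalyticOnNhd ℂ g s) (c : ℂ) (n : ℕ) :
    ∀ z ∈ s, iteratedDeriv n (fun x => c * g x) z = c * iteratedDeriv n g z := by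
  induction n with
  | zero => intro z hz; simp
  | succ n ih =>
    intro z hz
    rw [iteratedDeriv_succ]
    have h1 : deriv (iteratedDeriv n fun x => c * g x) z
        = deriv (fun x => c * iteratedDeriv n g x) z := by
      apply Filter.EventuallyEq.deriv_eq
      filter_upwards [hs.mem_nhds hz] with ζ hζ using ih ζ hζ
    rw [h1, deriv_const_mul c ((aux_analytic_iter hs hg n z hz).differentiableAt),
      ← iteratedDeriv_succ]
noncomputable def bolC (m j i : ℕ) : ℂ :=
  (j.choose i : ℂ) * ∏ s ∈ Finset.Ico i j, ((m : ℂ) - 1 - (s : ℂ))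

lemma bolC_self (m j : ℕ) : bolC m j j = 1 := by simp [bolC]

lemma bolC_top (m j : ℕ) : bolC m j (j + 1) = 0 := by
  simp [bolC, Nat.choose_succ_self]

lemma bolC_rec0 (m j : ℕ) : bolC m (j + 1) 0 = ((m : ℂ) - 1 - (j : ℂ)) * bolC m j 0 := by
  simp only [bolC, Nat.choose_zero_right, Nat.cast_one, one_mul]
  rw [Finset.prod_Ico_succ_top (Nat.zero_le j)]
  ring

lemma bolC_rec (m : ℕ) {j i : ℕ} (h : i ≤ j) :
    bolC m (j + 1) (i + 1)
      = ((m : ℂ) - 1 - (j : ℂ) - ((i : ℂ) + 1)) * bolC m j (i + 1) + bolC m j i := by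
  rcases eq_or_lt_of_le h with rfl | hlt
  · rw [bolC_self, bolC_self, bolC_top]; ring
  · simp only [bolC]
    rw [Nat.choose_succ_succ j i]
    rw [Finset.prod_Ico_succ_top (by omega : i + 1 ≤ j)]
    rw [Finset.prod_eq_prod_Ico_succ_bot hlt]
    have key : (j.choose (i + 1) : ℂ) * ((i : ℂ) + 1) = (j.choose i : ℂ) * ((j : ℂ) - (i : ℂ)) := by
      have h2 := Nat.choose_succ_right_eq j i
      have h3 : ((j.choose (i + 1) * (i + 1) : ℕ) : ℂ) = ((j.choose i * (j - i) : ℕ) : ℂ) := by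
        exact_mod_cast congrArg (fun t : ℕ => (t : ℂ)) h2
      push_cast [Nat.cast_sub h] at h3
      exact h3
    simp only [Nat.succ_eq_add_one]
    push_cast
    linear_combination (∏ s ∈ Finset.Ico (i + 1) j, ((m : ℂ) - 1 - (s : ℂ))) * key

lemma bolC_eq_zero {m i : ℕ} (h : i < m) : bolC m m i = 0 := by
  unfold bolC
  rw [Finset.prod_eq_zero (Finset.mem_Ico.mpr ⟨by omega, by omega⟩ : m - 1 ∈ Finset.Ico i m)]
  · exact mul_zero _
  · have h1 : ((m - 1 : ℕ) : ℂ) = (m : ℂ) - 1 := by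
      have : 1 ≤ m := by omega
      push_cast [Nat.cast_sub this]
      ring
    rw [h1]; ring

lemma bol_sum {s : Set ℂ} (hs : IsOpen s) (hs0 : ∀ z ∈ s, z ≠ (0 : ℂ))
    {M : ℕ} (hM : (M : ℂ) ≠ 0) (hσ : ∀ z ∈ s, (-1 / ((M : ℂ) * z)) ∈ s)
    {G : ℂ → ℂ} (hG : AnalyticOnNhd ℂ G s) (m : ℕ) (j : ℕ) :
    ∀ z ∈ s,
      iteratedDeriv j (fun ζ => G (-1 / ((M : ℂ) * ζ)) * ζ ^ ((m : ℤ) - 1)) z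
        = ∑ i ∈ Finset.range (j + 1),
            bolC m j i * (M : ℂ) ^ (-(i : ℤ)) * z ^ ((m : ℤ) - 1 - (j : ℤ) - (i : ℤ)) *
              iteratedDeriv i G (-1 / ((M : ℂ) * z)) := by
  induction j with
  | zero =>
    intro z hz
    simp only [iteratedDeriv_zero, zero_add, Finset.sum_range_one, Nat.cast_zero, neg_zero,
      zpow_zero, sub_zero, bolC_self, one_mul, mul_one]
    exact mul_comm _ _
  | succ j ih =>
    intro z hz
    have hz0 := hs0 z hz
    have hw := hσ z hz
    have hσd : HasDerivAt (fun ζ : ℂ => -1 / ((M : ℂ) * ζ)) (((M : ℂ) * z ^ 2)⁻¹) z := by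
      have h1 : HasDerivAt (fun ζ : ℂ => (M : ℂ) * ζ) ((M : ℂ) * 1) z :=
        (hasDerivAt_id z).const_mul _
      have h2 := (h1.inv (mul_ne_zero hM hz0)).neg
      have h3 : (fun ζ : ℂ => -((M : ℂ) * ζ)⁻¹) = fun ζ : ℂ => -1 / ((M : ℂ) * ζ) := by
        funext ζ; rw [neg_div, one_div]
      change HasDerivAt (fun ζ : ℂ => -((M : ℂ) * ζ)⁻¹) _ z at h2
      rw [h3] at h2
      convert h2 using 1
      field_simp
    rw [iteratedDeriv_succ]
    have hder : deriv (iteratedDeriv j (fun ζ => G (-1 / ((M : ℂ) * ζ)) * ζ ^ ((m : ℤ) - 1))) z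
        = ∑ i ∈ Finset.range (j + 1),
            bolC m j i * (M : ℂ) ^ (-(i : ℤ)) *
              (((((m : ℤ) - 1 - (j : ℤ) - (i : ℤ)) : ℤ) : ℂ)
                  * z ^ ((m : ℤ) - 1 - (j : ℤ) - (i : ℤ) - 1) *
                  iteratedDeriv i G (-1 / ((M : ℂ) * z))
                + z ^ ((m : ℤ) - 1 - (j : ℤ) - (i : ℤ)) *
                  (iteratedDeriv (i + 1) G (-1 / ((M : ℂ) * z)) * ((M : ℂ) * z ^ 2)⁻¹)) := by
      have hev : deriv (iteratedDeriv j (fun ζ => G (-1 / ((M : ℂ) * ζ)) * ζ ^ ((m : ℤ) - 1))) z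
          = deriv (fun ζ : ℂ => ∑ i ∈ Finset.range (j + 1),
              bolC m j i * (M : ℂ) ^ (-(i : ℤ)) * ζ ^ ((m : ℤ) - 1 - (j : ℤ) - (i : ℤ)) *
                iteratedDeriv i G (-1 / ((M : ℂ) * ζ))) z := by
        apply Filter.EventuallyEq.deriv_eq
        filter_upwards [hs.mem_nhds hz] with ζ hζ using ih ζ hζ
      rw [hev]
      have hsum : HasDerivAt (fun ζ : ℂ => ∑ i ∈ Finset.range (j + 1),
          bolC m j i * (M : ℂ) ^ (-(i : ℤ)) * ζ ^ ((m : ℤ) - 1 - (j : ℤ) - (i : ℤ)) *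
            iteratedDeriv i G (-1 / ((M : ℂ) * ζ)))
          (∑ i ∈ Finset.range (j + 1),
            bolC m j i * (M : ℂ) ^ (-(i : ℤ)) *
              (((((m : ℤ) - 1 - (j : ℤ) - (i : ℤ)) : ℤ) : ℂ)
                  * z ^ ((m : ℤ) - 1 - (j : ℤ) - (i : ℤ) - 1) *
                  iteratedDeriv i G (-1 / ((M : ℂ) * z))
                + z ^ ((m : ℤ) - 1 - (j : ℤ) - (i : ℤ)) *
                  (iteratedDeriv (i + 1) G (-1 / ((M : ℂ) * z)) * ((M : ℂ) * z ^ 2)⁻¹))) z := by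
        apply HasDerivAt.fun_sum
        intro i _
        have hGi : HasDerivAt (iteratedDeriv i G)
            (iteratedDeriv (i + 1) G (-1 / ((M : ℂ) * z))) (-1 / ((M : ℂ) * z)) := by
          rw [iteratedDeriv_succ]
          exact ((aux_analytic_iter hs hG i) _ hw).differentiableAt.hasDerivAt
        have hcomp : HasDerivAt (fun ζ : ℂ => iteratedDeriv i G (-1 / ((M : ℂ) * ζ)))
            (iteratedDeriv (i + 1) G (-1 / ((M : ℂ) * z)) * ((M : ℂ) * z ^ 2)⁻¹) z :=
          HasDerivAt.comp (h₂ := iteratedDeriv i G) z hGi hσd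
        have hpow : HasDerivAt (fun ζ : ℂ => ζ ^ ((m : ℤ) - 1 - (j : ℤ) - (i : ℤ)))
            (((((m : ℤ) - 1 - (j : ℤ) - (i : ℤ)) : ℤ) : ℂ)
              * z ^ ((m : ℤ) - 1 - (j : ℤ) - (i : ℤ) - 1)) z :=
          hasDerivAt_zpow _ z (Or.inl hz0)
        have hKmul := (hpow.mul hcomp).const_mul (bolC m j i * (M : ℂ) ^ (-(i : ℤ)))
        have hfun : (fun ζ : ℂ => bolC m j i * (M : ℂ) ^ (-(i : ℤ)) *
              (ζ ^ ((m : ℤ) - 1 - (j : ℤ) - (i : ℤ)) * iteratedDeriv i G (-1 / ((M : ℂ) * ζ))))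
            = fun ζ : ℂ => bolC m j i * (M : ℂ) ^ (-(i : ℤ)) *
              ζ ^ ((m : ℤ) - 1 - (j : ℤ) - (i : ℤ)) * iteratedDeriv i G (-1 / ((M : ℂ) * ζ)) := by
          funext ζ; ring
        change HasDerivAt (fun ζ : ℂ => bolC m j i * (M : ℂ) ^ (-(i : ℤ)) *
              (ζ ^ ((m : ℤ) - 1 - (j : ℤ) - (i : ℤ)) * iteratedDeriv i G (-1 / ((M : ℂ) * ζ)))) _ z at hKmul
        rw [hfun] at hKmul
        exact hKmul
      exact hsum.deriv
    rw [hder]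
    conv_rhs => rw [Finset.sum_range_succ']
    beta_reduce
    have h1 : ∀ i ∈ Finset.range (j + 1),
        bolC m (j + 1) (i + 1) * (M : ℂ) ^ (-((i + 1 : ℕ) : ℤ)) *
            z ^ ((m : ℤ) - 1 - ((j + 1 : ℕ) : ℤ) - ((i + 1 : ℕ) : ℤ)) *
            iteratedDeriv (i + 1) G (-1 / ((M : ℂ) * z))
          = (((m : ℂ) - 1 - (j : ℂ) - ((i : ℂ) + 1)) * bolC m j (i + 1) *
                (M : ℂ) ^ (-((i + 1 : ℕ) : ℤ)) *
                (z ^ ((m : ℤ) - 1 - (j : ℤ) - (i : ℤ)) * z⁻¹ * z⁻¹) *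
                iteratedDeriv (i + 1) G (-1 / ((M : ℂ) * z)))
            + (bolC m j i * (M : ℂ) ^ (-(i : ℤ)) *
                (z ^ ((m : ℤ) - 1 - (j : ℤ) - (i : ℤ)) * z⁻¹ * z⁻¹ * (M : ℂ)⁻¹) *
                iteratedDeriv (i + 1) G (-1 / ((M : ℂ) * z))) := by
      intro i hi
      have hij : i ≤ j := by
        have := Finset.mem_range.mp hi; omega
      rw [bolC_rec m hij]
      rw [show ((m : ℤ) - 1 - ((j + 1 : ℕ) : ℤ) - ((i + 1 : ℕ) : ℤ))
            = ((m : ℤ) - 1 - (j : ℤ) - (i : ℤ)) - 1 - 1 from by push_cast; ring]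
      rw [zpow_sub_one₀ hz0, zpow_sub_one₀ hz0]
      rw [show (-((i + 1 : ℕ) : ℤ)) = -(i : ℤ) - 1 from by push_cast; ring]
      rw [zpow_sub_one₀ hM]
      push_cast
      ring
    have h2 : ∀ i ∈ Finset.range (j + 1),
        (((m : ℂ) - 1 - (j : ℂ) - ((i : ℂ) + 1)) * bolC m j (i + 1) *
              (M : ℂ) ^ (-((i + 1 : ℕ) : ℤ)) *
              (z ^ ((m : ℤ) - 1 - (j : ℤ) - (i : ℤ)) * z⁻¹ * z⁻¹) *
              iteratedDeriv (i + 1) G (-1 / ((M : ℂ) * z)))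
          = ((m : ℂ) - 1 - (j : ℂ) - ((i + 1 : ℕ) : ℂ)) * bolC m j (i + 1) *
              (M : ℂ) ^ (-((i + 1 : ℕ) : ℤ)) *
              (z ^ ((m : ℤ) - 1 - (j : ℤ) - ((i + 1 : ℕ) : ℤ)) * z⁻¹) *
              iteratedDeriv (i + 1) G (-1 / ((M : ℂ) * z)) := by
      intro i _
      rw [show ((m : ℤ) - 1 - (j : ℤ) - ((i + 1 : ℕ) : ℤ))
            = ((m : ℤ) - 1 - (j : ℤ) - (i : ℤ)) - 1 from by push_cast; ring]
      rw [zpow_sub_one₀ hz0]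
      push_cast
      ring
    have h6 : ∀ i ∈ Finset.range (j + 1),
        bolC m j i * (M : ℂ) ^ (-(i : ℤ)) *
            (((((m : ℤ) - 1 - (j : ℤ) - (i : ℤ)) : ℤ) : ℂ)
                * z ^ ((m : ℤ) - 1 - (j : ℤ) - (i : ℤ) - 1) *
                iteratedDeriv i G (-1 / ((M : ℂ) * z))
              + z ^ ((m : ℤ) - 1 - (j : ℤ) - (i : ℤ)) *
                (iteratedDeriv (i + 1) G (-1 / ((M : ℂ) * z)) * ((M : ℂ) * z ^ 2)⁻¹))
          = (((m : ℂ) - 1 - (j : ℂ) - (i : ℂ)) * bolC m j i * (M : ℂ) ^ (-(i : ℤ)) *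
                (z ^ ((m : ℤ) - 1 - (j : ℤ) - (i : ℤ)) * z⁻¹) *
                iteratedDeriv i G (-1 / ((M : ℂ) * z)))
            + (bolC m j i * (M : ℂ) ^ (-(i : ℤ)) *
                (z ^ ((m : ℤ) - 1 - (j : ℤ) - (i : ℤ)) * z⁻¹ * z⁻¹ * (M : ℂ)⁻¹) *
                iteratedDeriv (i + 1) G (-1 / ((M : ℂ) * z))) := by
      intro i _
      rw [zpow_sub_one₀ hz0, mul_inv, pow_two, mul_inv]
      push_cast
      ring
    have h3 := Finset.sum_range_succ' (fun i : ℕ =>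
      ((m : ℂ) - 1 - (j : ℂ) - (i : ℂ)) * bolC m j i * (M : ℂ) ^ (-(i : ℤ)) *
        (z ^ ((m : ℤ) - 1 - (j : ℤ) - (i : ℤ)) * z⁻¹) *
        iteratedDeriv i G (-1 / ((M : ℂ) * z))) (j + 1)
    have h4 := Finset.sum_range_succ (fun i : ℕ =>
      ((m : ℂ) - 1 - (j : ℂ) - (i : ℂ)) * bolC m j i * (M : ℂ) ^ (-(i : ℤ)) *
        (z ^ ((m : ℤ) - 1 - (j : ℤ) - (i : ℤ)) * z⁻¹) *
        iteratedDeriv i G (-1 / ((M : ℂ) * z))) (j + 1)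
    beta_reduce at h3 h4
    have h5 : ((m : ℂ) - 1 - (j : ℂ) - ((j + 1 : ℕ) : ℂ)) * bolC m j (j + 1) *
          (M : ℂ) ^ (-((j + 1 : ℕ) : ℤ)) *
          (z ^ ((m : ℤ) - 1 - (j : ℤ) - ((j + 1 : ℕ) : ℤ)) * z⁻¹) *
          iteratedDeriv (j + 1) G (-1 / ((M : ℂ) * z)) = 0 := by
      rw [bolC_top]
      ring
    rw [Finset.sum_congr rfl h1, Finset.sum_add_distrib, Finset.sum_congr rfl h2,
      Finset.sum_congr rfl h6, Finset.sum_add_distrib]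
    rw [show ((m : ℤ) - 1 - ((j + 1 : ℕ) : ℤ) - ((0 : ℕ) : ℤ))
          = ((m : ℤ) - 1 - (j : ℤ) - ((0 : ℕ) : ℤ)) - 1 from by push_cast; ring]
    rw [zpow_sub_one₀ hz0, bolC_rec0]
    push_cast at h3 h4 h5 ⊢
    linear_combination h3 - h4 - h5

lemma bol_eval {s : Set ℂ} (hs : IsOpen s) (hs0 : ∀ z ∈ s, z ≠ (0 : ℂ))
    {M : ℕ} (hM : (M : ℂ) ≠ 0) (hσ : ∀ z ∈ s, (-1 / ((M : ℂ) * z)) ∈ s)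
    {G : ℂ → ℂ} (hG : AnalyticOnNhd ℂ G s) (m : ℕ) {z : ℂ} (hz : z ∈ s) :
    iteratedDeriv m (fun ζ => G (-1 / ((M : ℂ) * ζ)) * ζ ^ ((m : ℤ) - 1)) z
      = (M : ℂ) ^ (-(m : ℤ)) * z ^ (-(m : ℤ) - 1) * iteratedDeriv m G (-1 / ((M : ℂ) * z)) := by
  rw [bol_sum hs hs0 hM hσ hG m m z hz]
  rw [Finset.sum_eq_single m]
  · rw [bolC_self]
    rw [show ((m : ℤ) - 1 - (m : ℤ) - (m : ℤ)) = -(m : ℤ) - 1 - (m : ℤ) + (m : ℤ) from by ring]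
    ring
  · intro i hi hne
    have him : i < m := by
      have := Finset.mem_range.mp hi; omega
    rw [bolC_eq_zero him]
    ring
  · intro h
    exact absurd (Finset.self_mem_range_succ m) h

/-- with `N₀ = N₁`, `N = 4N₀²` and the Fricke transformation laws
`θ₀|_{1/2}W_N = (iN₀)^{-1/2} τ(ψ₀) θ₀`, `θ₁|_{3/2}W_N = -(iN₀)^{-1/2} τ(ψ₁) θ₁`,
one has `δ_a^{k-1}(f|_{2-k}W_N) = -(τ(ψ₀)/τ(ψ₁)) (δ_a^{k-1}f)|_k W_N`
(`k = m + 3/2`). -/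
theorem bolDelta_fricke_equivariance
    (N₀ : ℕ) [NeZero N₀]
    (ψ₀ ψ₁ : DirichletCharacter ℂ N₀)
    (hreal₀ : ∀ n : ℤ, (ψ₀ (n : ZMod N₀)).im = 0)
    (heven₀ : ψ₀ (-1) = 1) (hprim₀ : ψ₀.IsPrimitive)
    (hreal₁ : ∀ n : ℤ, (ψ₁ (n : ZMod N₀)).im = 0)
    (hodd₁ : ψ₁ (-1) = -1) (hprim₁ : ψ₁.IsPrimitive)
    (θ₀ θ₁ : ℂ → ℂ)
    (hθ₀ne : ∀ z : ℂ, 0 < z.im → θ₀ z ≠ 0)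
    (hθ₁ne : ∀ z : ℂ, 0 < z.im → θ₁ z ≠ 0)
    (hθ₀hol : DifferentiableOn ℂ θ₀ {w : ℂ | 0 < w.im})
    (hθ₁hol : DifferentiableOn ℂ θ₁ {w : ℂ | 0 < w.im})
    (N : ℕ) (hN : N = 4 * N₀ ^ 2)
    (hθ₀W : ∀ z : ℂ, 0 < z.im →
      fslash (1 / 2) N θ₀ z
        = (Complex.I * (N₀ : ℂ)) ^ (-(1 : ℂ) / 2) * gaussSumChar N₀ ψ₀ * θ₀ z)
    (hθ₁W : ∀ z : ℂ, 0 < z.im →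
      fslash (3 / 2) N θ₁ z
        = -((Complex.I * (N₀ : ℂ)) ^ (-(1 : ℂ) / 2) * gaussSumChar N₀ ψ₁ * θ₁ z))
    (m : ℕ) (a : ℤ) (f : ℂ → ℂ)
    (hf : DifferentiableOn ℂ f {w : ℂ | 0 < w.im}) :
    ∀ z : ℂ, 0 < z.im →
      bolDelta m a θ₀ θ₁ (fslash ((1 : ℝ) / 2 - m) N f) z
        = -(gaussSumChar N₀ ψ₀ / gaussSumChar N₀ ψ₁) *
            fslash ((m : ℝ) + 3 / 2) N (bolDelta m a θ₀ θ₁ f) z := by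
  intro z hz
  set c0 : ℂ := (Complex.I * (N₀ : ℂ)) ^ (-(1 : ℂ) / 2) * gaussSumChar N₀ ψ₀ with hc0def
  set c1 : ℂ := (Complex.I * (N₀ : ℂ)) ^ (-(1 : ℂ) / 2) * gaussSumChar N₀ ψ₁ with hc1def
  have hN₀pos : 0 < N₀ := Nat.pos_of_ne_zero (NeZero.ne N₀)
  have hNpos : 0 < N := by rw [hN]; positivity
  have hNC : (N : ℂ) ≠ 0 := by
    simpa using (Nat.cast_ne_zero (R := ℂ)).mpr hNpos.ne'
  have hz0 : z ≠ 0 := fun h => by simp [h] at hz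
  have hopen : IsOpen {w : ℂ | 0 < w.im} := auxIsOpen
  have hs0 : ∀ ζ ∈ {w : ℂ | 0 < w.im}, ζ ≠ (0 : ℂ) := by
    intro ζ hζ h
    rw [h] at hζ
    simp at hζ
  have hσmem : ∀ ζ ∈ {w : ℂ | 0 < w.im}, (-1 / ((N : ℂ) * ζ)) ∈ {w : ℂ | 0 < w.im} :=
    fun ζ hζ => aux_mem_upper hNpos hζ
  have hwz : (-1 / ((N : ℂ) * z)) ∈ {w : ℂ | 0 < w.im} := hσmem z hz
  have hsqR : (0 : ℝ) < Real.sqrt (N : ℝ) := Real.sqrt_pos.mpr (by exact_mod_cast hNpos)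
  have hsqC : ((Real.sqrt (N : ℝ) : ℝ) : ℂ) ≠ 0 := Complex.ofReal_ne_zero.mpr hsqR.ne'
  have hNs : (N : ℂ) = ((Real.sqrt (N : ℝ) : ℝ) : ℂ) ^ (2 : ℕ) := by
    rw [← Complex.ofReal_pow, Real.sq_sqrt (by positivity : (0 : ℝ) ≤ (N : ℝ))]
    exact (Complex.ofReal_natCast N).symm
  have hsne : ∀ ζ : ℂ, ζ ≠ 0 → ((Real.sqrt (N : ℝ) : ℝ) : ℂ) * ζ ≠ 0 :=
    fun ζ h => mul_ne_zero hsqC h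
  -- pointwise Fricke laws
  have hθ₀' : ∀ ζ : ℂ, 0 < ζ.im →
      θ₀ (-1 / ((N : ℂ) * ζ))
        = c0 * θ₀ ζ * (((Real.sqrt (N : ℝ) : ℝ) : ℂ) * ζ) ^ ((1 : ℂ) / 2) := by
    intro ζ hζ
    have hζ0 : ζ ≠ 0 := fun h => by simp [h] at hζ
    have h := hθ₀W ζ hζ
    simp only [fslash] at h
    have hs1 := hsne ζ hζ0
    have hcan : (((Real.sqrt (N : ℝ) : ℝ) : ℂ) * ζ) ^ (-((1 / 2 : ℝ) : ℂ)) *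
        (((Real.sqrt (N : ℝ) : ℝ) : ℂ) * ζ) ^ ((1 : ℂ) / 2) = 1 := by
      rw [← Complex.cpow_add _ _ hs1,
        show (-((1 / 2 : ℝ) : ℂ) + (1 : ℂ) / 2) = 0 from by push_cast; ring]
      exact Complex.cpow_zero _
    calc θ₀ (-1 / ((N : ℂ) * ζ))
        = θ₀ (-1 / ((N : ℂ) * ζ)) * ((((Real.sqrt (N : ℝ) : ℝ) : ℂ) * ζ) ^ (-((1 / 2 : ℝ) : ℂ)) *
            (((Real.sqrt (N : ℝ) : ℝ) : ℂ) * ζ) ^ ((1 : ℂ) / 2)) := by rw [hcan, mul_one]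
      _ = (θ₀ (-1 / ((N : ℂ) * ζ)) * ((((Real.sqrt (N : ℝ) : ℝ) : ℂ) * ζ) ^ (-((1 / 2 : ℝ) : ℂ)))) *
            (((Real.sqrt (N : ℝ) : ℝ) : ℂ) * ζ) ^ ((1 : ℂ) / 2) := by ring
      _ = (c0 * θ₀ ζ) * (((Real.sqrt (N : ℝ) : ℝ) : ℂ) * ζ) ^ ((1 : ℂ) / 2) := by rw [h]
      _ = c0 * θ₀ ζ * (((Real.sqrt (N : ℝ) : ℝ) : ℂ) * ζ) ^ ((1 : ℂ) / 2) := by ring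
  have hθ₁' : ∀ ζ : ℂ, 0 < ζ.im →
      θ₁ (-1 / ((N : ℂ) * ζ))
        = -(c1 * θ₁ ζ * (((Real.sqrt (N : ℝ) : ℝ) : ℂ) * ζ) ^ ((3 : ℂ) / 2)) := by
    intro ζ hζ
    have hζ0 : ζ ≠ 0 := fun h => by simp [h] at hζ
    have h := hθ₁W ζ hζ
    simp only [fslash] at h
    have hs1 := hsne ζ hζ0
    have hcan : (((Real.sqrt (N : ℝ) : ℝ) : ℂ) * ζ) ^ (-((3 / 2 : ℝ) : ℂ)) *
        (((Real.sqrt (N : ℝ) : ℝ) : ℂ) * ζ) ^ ((3 : ℂ) / 2) = 1 := by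
      rw [← Complex.cpow_add _ _ hs1,
        show (-((3 / 2 : ℝ) : ℂ) + (3 : ℂ) / 2) = 0 from by push_cast; ring]
      exact Complex.cpow_zero _
    calc θ₁ (-1 / ((N : ℂ) * ζ))
        = θ₁ (-1 / ((N : ℂ) * ζ)) * ((((Real.sqrt (N : ℝ) : ℝ) : ℂ) * ζ) ^ (-((3 / 2 : ℝ) : ℂ)) *
            (((Real.sqrt (N : ℝ) : ℝ) : ℂ) * ζ) ^ ((3 : ℂ) / 2)) := by rw [hcan, mul_one]
      _ = (θ₁ (-1 / ((N : ℂ) * ζ)) * ((((Real.sqrt (N : ℝ) : ℝ) : ℂ) * ζ) ^ (-((3 / 2 : ℝ) : ℂ)))) *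
            (((Real.sqrt (N : ℝ) : ℝ) : ℂ) * ζ) ^ ((3 : ℂ) / 2) := by ring
      _ = (-(c1 * θ₁ ζ)) * (((Real.sqrt (N : ℝ) : ℝ) : ℂ) * ζ) ^ ((3 : ℂ) / 2) := by rw [h]
      _ = -(c1 * θ₁ ζ * (((Real.sqrt (N : ℝ) : ℝ) : ℂ) * ζ) ^ ((3 : ℂ) / 2)) := by ring
  -- nonvanishing of the constants
  have hc₀ : c0 ≠ 0 := by
    intro h0
    have h1 := hθ₀' z hz
    rw [h0, zero_mul, zero_mul] at h1
    exact hθ₀ne _ (aux_mem_upper hNpos hz) h1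
  have hc₁ : c1 ≠ 0 := by
    intro h0
    have h1 := hθ₁' z hz
    rw [h0, zero_mul, zero_mul, neg_zero] at h1
    exact hθ₁ne _ (aux_mem_upper hNpos hz) h1
  have hτ₁ : gaussSumChar N₀ ψ₁ ≠ 0 := right_ne_zero_of_mul hc₁
  have hnegc₁ : -c1 ≠ 0 := neg_ne_zero.mpr hc₁
  -- analyticity
  have hGdiff : DifferentiableOn ℂ (fun w => θ₀ w ^ (1 - 3 * a) * θ₁ w ^ a * f w)
      {w : ℂ | 0 < w.im} := by
    intro ζ hζ
    have h0 : DifferentiableAt ℂ θ₀ ζ := hθ₀hol.differentiableAt (hopen.mem_nhds hζ)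
    have h1 : DifferentiableAt ℂ θ₁ ζ := hθ₁hol.differentiableAt (hopen.mem_nhds hζ)
    have h2 : DifferentiableAt ℂ f ζ := hf.differentiableAt (hopen.mem_nhds hζ)
    exact (((h0.zpow (Or.inl (hθ₀ne ζ hζ))).mul (h1.zpow (Or.inl (hθ₁ne ζ hζ)))).mul
      h2).differentiableWithinAt
  have hG : AnalyticOnNhd ℂ (fun w => θ₀ w ^ (1 - 3 * a) * θ₁ w ^ a * f w) {w : ℂ | 0 < w.im} :=
    hGdiff.analyticOnNhd hopen
  have hHdiff : DifferentiableOn ℂ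
      (fun ζ => (θ₀ (-1 / ((N : ℂ) * ζ)) ^ (1 - 3 * a) * θ₁ (-1 / ((N : ℂ) * ζ)) ^ a *
          f (-1 / ((N : ℂ) * ζ))) * ζ ^ ((m : ℤ) - 1)) {w : ℂ | 0 < w.im} := by
    intro ζ hζ
    have hσd : DifferentiableAt ℂ (fun ξ : ℂ => -1 / ((N : ℂ) * ξ)) ζ :=
      (differentiableAt_const (-1 : ℂ)).div ((differentiableAt_const _).mul differentiableAt_id)
        (mul_ne_zero hNC (hs0 ζ hζ))
    have hc : DifferentiableAt ℂ
        (fun ξ : ℂ => (fun w => θ₀ w ^ (1 - 3 * a) * θ₁ w ^ a * f w) (-1 / ((N : ℂ) * ξ))) ζ :=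
      DifferentiableAt.comp (g := fun w => θ₀ w ^ (1 - 3 * a) * θ₁ w ^ a * f w) ζ
        ((hG _ (hσmem ζ hζ)).differentiableAt) hσd
    exact (hc.mul (differentiableAt_id.zpow (Or.inl (hs0 ζ hζ)))).differentiableWithinAt
  have hH : AnalyticOnNhd ℂ
      (fun ζ => (θ₀ (-1 / ((N : ℂ) * ζ)) ^ (1 - 3 * a) * θ₁ (-1 / ((N : ℂ) * ζ)) ^ a *
          f (-1 / ((N : ℂ) * ζ))) * ζ ^ ((m : ℤ) - 1)) {w : ℂ | 0 < w.im} :=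
    hHdiff.analyticOnNhd hopen
  -- the inner function of the LHS agrees with a Bol-shaped function on the upper half plane
  have hEqOn : Set.EqOn
      (fun w => θ₀ w ^ (1 - 3 * a) * θ₁ w ^ a *
        (f (-1 / ((N : ℂ) * w)) *
          (((Real.sqrt (N : ℝ) : ℝ) : ℂ) * w) ^ (-(((1 : ℝ) / 2 - (m : ℝ) : ℝ) : ℂ))))
      (fun ζ => (c0 ^ (3 * a - 1) * (-c1) ^ (-a) * ((Real.sqrt (N : ℝ) : ℝ) : ℂ) ^ ((m : ℤ) - 1)) *
        ((θ₀ (-1 / ((N : ℂ) * ζ)) ^ (1 - 3 * a) * θ₁ (-1 / ((N : ℂ) * ζ)) ^ a *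
            f (-1 / ((N : ℂ) * ζ))) * ζ ^ ((m : ℤ) - 1)))
      {w : ℂ | 0 < w.im} := by
    intro ζ hζ
    have hζim : 0 < ζ.im := hζ
    have hζ0 : ζ ≠ 0 := hs0 ζ hζ
    have hs1 : ((Real.sqrt (N : ℝ) : ℝ) : ℂ) * ζ ≠ 0 := hsne ζ hζ0
    simp only []
    rw [hθ₀' ζ hζim, hθ₁' ζ hζim]
    rw [show -(c1 * θ₁ ζ * (((Real.sqrt (N : ℝ) : ℝ) : ℂ) * ζ) ^ ((3 : ℂ) / 2))
          = (-c1) * θ₁ ζ * (((Real.sqrt (N : ℝ) : ℝ) : ℂ) * ζ) ^ ((3 : ℂ) / 2) from by ring]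
    simp only [mul_zpow]
    have hcc : c0 ^ (3 * a - 1) * c0 ^ (1 - 3 * a) = 1 := by
      rw [← zpow_add₀ hc₀, show (3 * a - 1) + (1 - 3 * a) = 0 from by ring, zpow_zero]
    have hdd : (-c1) ^ (-a) * (-c1) ^ a = 1 := by
      rw [← zpow_add₀ hnegc₁, show (-a) + a = 0 from by ring, zpow_zero]
    have hs3 : ((((Real.sqrt (N : ℝ) : ℝ) : ℂ) * ζ) ^ ((1 : ℂ) / 2)) ^ (1 - 3 * a) *
          ((((Real.sqrt (N : ℝ) : ℝ) : ℂ) * ζ) ^ ((3 : ℂ) / 2)) ^ a *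
          (((Real.sqrt (N : ℝ) : ℝ) : ℂ) ^ ((m : ℤ) - 1) * ζ ^ ((m : ℤ) - 1))
        = (((Real.sqrt (N : ℝ) : ℝ) : ℂ) * ζ) ^ (-(((1 : ℝ) / 2 - (m : ℝ) : ℝ) : ℂ)) := by
      rw [← mul_zpow]
      rw [← Complex.cpow_mul_int _ _ (1 - 3 * a), ← Complex.cpow_mul_int _ _ a,
        ← Complex.cpow_intCast ((((Real.sqrt (N : ℝ) : ℝ) : ℂ) * ζ)) ((m : ℤ) - 1),
        ← Complex.cpow_add _ _ hs1, ← Complex.cpow_add _ _ hs1]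
      congr 1
      push_cast
      ring
    trans ((c0 ^ (3 * a - 1) * c0 ^ (1 - 3 * a)) * ((-c1) ^ (-a) * (-c1) ^ a) *
      (((((Real.sqrt (N : ℝ) : ℝ) : ℂ) * ζ) ^ ((1 : ℂ) / 2)) ^ (1 - 3 * a) *
        ((((Real.sqrt (N : ℝ) : ℝ) : ℂ) * ζ) ^ ((3 : ℂ) / 2)) ^ a *
        (((Real.sqrt (N : ℝ) : ℝ) : ℂ) ^ ((m : ℤ) - 1) * ζ ^ ((m : ℤ) - 1))) *
      (θ₀ ζ ^ (1 - 3 * a) * θ₁ ζ ^ a * f (-1 / ((N : ℂ) * ζ))))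
    · rw [hcc, hdd, hs3]
      ring
    · ring
  -- unfold and rewrite
  simp only [bolDelta, fslash]
  rw [aux_iterdw hopen m _ z hz, aux_iterdw hopen m _ _ hwz]
  rw [Set.EqOn.iteratedDeriv_of_isOpen hEqOn hopen m hz]
  have hcm : iteratedDeriv m
      (fun ζ => (c0 ^ (3 * a - 1) * (-c1) ^ (-a) * ((Real.sqrt (N : ℝ) : ℝ) : ℂ) ^ ((m : ℤ) - 1)) *
        ((θ₀ (-1 / ((N : ℂ) * ζ)) ^ (1 - 3 * a) * θ₁ (-1 / ((N : ℂ) * ζ)) ^ a *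
            f (-1 / ((N : ℂ) * ζ))) * ζ ^ ((m : ℤ) - 1))) z
      = (c0 ^ (3 * a - 1) * (-c1) ^ (-a) * ((Real.sqrt (N : ℝ) : ℝ) : ℂ) ^ ((m : ℤ) - 1)) *
        iteratedDeriv m
          (fun ζ => (θ₀ (-1 / ((N : ℂ) * ζ)) ^ (1 - 3 * a) * θ₁ (-1 / ((N : ℂ) * ζ)) ^ a *
              f (-1 / ((N : ℂ) * ζ))) * ζ ^ ((m : ℤ) - 1)) z :=
    aux_constmul hopen hH _ m z hz
  rw [hcm]
  have hbe : iteratedDeriv m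
      (fun ζ => (θ₀ (-1 / ((N : ℂ) * ζ)) ^ (1 - 3 * a) * θ₁ (-1 / ((N : ℂ) * ζ)) ^ a *
          f (-1 / ((N : ℂ) * ζ))) * ζ ^ ((m : ℤ) - 1)) z
      = (N : ℂ) ^ (-(m : ℤ)) * z ^ (-(m : ℤ) - 1) *
        iteratedDeriv m (fun w => θ₀ w ^ (1 - 3 * a) * θ₁ w ^ a * f w) (-1 / ((N : ℂ) * z)) :=
    bol_eval hopen hs0 hNC hσmem hG m hz
  rw [hbe]
  rw [hθ₀' z hz, hθ₁' z hz]
  rw [show -(c1 * θ₁ z * (((Real.sqrt (N : ℝ) : ℝ) : ℂ) * z) ^ ((3 : ℂ) / 2))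
        = (-c1) * θ₁ z * (((Real.sqrt (N : ℝ) : ℝ) : ℂ) * z) ^ ((3 : ℂ) / 2) from by ring]
  simp only [mul_zpow]
  -- scalar identity
  have hsp : ((((Real.sqrt (N : ℝ) : ℝ) : ℂ) * z) ^ ((1 : ℂ) / 2)) ^ (3 * a - 2) *
        ((((Real.sqrt (N : ℝ) : ℝ) : ℂ) * z) ^ ((3 : ℂ) / 2)) ^ (1 - a) *
        (((Real.sqrt (N : ℝ) : ℝ) : ℂ) * z) ^ (-(((m : ℝ) + 3 / 2 : ℝ) : ℂ))
      = ((Real.sqrt (N : ℝ) : ℝ) : ℂ) ^ (-(m : ℤ) - 1) * z ^ (-(m : ℤ) - 1) := by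
    rw [← Complex.cpow_mul_int _ _ (3 * a - 2), ← Complex.cpow_mul_int _ _ (1 - a),
      ← Complex.cpow_add _ _ (hsne z hz0), ← Complex.cpow_add _ _ (hsne z hz0)]
    rw [show ((1 : ℂ) / 2 * ((3 * a - 2 : ℤ) : ℂ) + (3 : ℂ) / 2 * ((1 - a : ℤ) : ℂ) +
          (-(((m : ℝ) + 3 / 2 : ℝ) : ℂ))) = ((-(m : ℤ) - 1 : ℤ) : ℂ) from by push_cast; ring]
    rw [Complex.cpow_intCast, mul_zpow]
  have hNp : ((Real.sqrt (N : ℝ) : ℝ) : ℂ) ^ ((m : ℤ) - 1) * (N : ℂ) ^ (-(m : ℤ))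
      = ((Real.sqrt (N : ℝ) : ℝ) : ℂ) ^ (-(m : ℤ) - 1) := by
    rw [hNs, ← zpow_natCast (((Real.sqrt (N : ℝ) : ℝ) : ℂ)) 2, ← zpow_mul, ← zpow_add₀ hsqC]
    congr 1
    push_cast
    ring
  have hkey : c0 = -(gaussSumChar N₀ ψ₀ / gaussSumChar N₀ ψ₁) * (-c1) := by
    rw [hc0def, hc1def]
    field_simp
  have hcp : c0 ^ (3 * a - 1) * (-c1) ^ (-a)
      = -(gaussSumChar N₀ ψ₀ / gaussSumChar N₀ ψ₁) * (c0 ^ (3 * a - 2) * (-c1) ^ (1 - a)) := by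
    rw [show (3 * a - 1 : ℤ) = (3 * a - 2) + 1 from by ring, zpow_add₀ hc₀, zpow_one,
      show (1 - a : ℤ) = (-a) + 1 from by ring, zpow_add₀ hnegc₁, zpow_one]
    linear_combination (c0 ^ (3 * a - 2) * (-c1) ^ (-a)) * hkey
  have hscal : c0 ^ (3 * a - 1) * (-c1) ^ (-a) * ((Real.sqrt (N : ℝ) : ℝ) : ℂ) ^ ((m : ℤ) - 1) *
        ((N : ℂ) ^ (-(m : ℤ)) * z ^ (-(m : ℤ) - 1))
      = -(gaussSumChar N₀ ψ₀ / gaussSumChar N₀ ψ₁) *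
        (c0 ^ (3 * a - 2) * (-c1) ^ (1 - a) *
          (((((Real.sqrt (N : ℝ) : ℝ) : ℂ) * z) ^ ((1 : ℂ) / 2)) ^ (3 * a - 2) *
            ((((Real.sqrt (N : ℝ) : ℝ) : ℂ) * z) ^ ((3 : ℂ) / 2)) ^ (1 - a) *
            (((Real.sqrt (N : ℝ) : ℝ) : ℂ) * z) ^ (-(((m : ℝ) + 3 / 2 : ℝ) : ℂ)))) := by
    rw [hsp]
    linear_combination (((Real.sqrt (N : ℝ) : ℝ) : ℂ) ^ ((m : ℤ) - 1) * (N : ℂ) ^ (-(m : ℤ)) *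
        z ^ (-(m : ℤ) - 1)) * hcp +
      (-(gaussSumChar N₀ ψ₀ / gaussSumChar N₀ ψ₁) * c0 ^ (3 * a - 2) * (-c1) ^ (1 - a) *
        z ^ (-(m : ℤ) - 1)) * hNp
  linear_combination (θ₀ z ^ (3 * a - 2) * θ₁ z ^ (1 - a) *
      ((2 : ℂ) ^ (-(m : ℤ)) * ((π : ℝ) : ℂ) ^ (-(m : ℤ)) * Complex.I ^ (-(m : ℤ)) *
      iteratedDeriv m (fun w => θ₀ w ^ (1 - 3 * a) * θ₁ w ^ a * f w) (-1 / ((N : ℂ) * z)))) * hscal
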